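/- arXiv:0909.0081 — 6 statements merged into one kernel-verified Lean document; each statement's English description precedes it below -/
import Mathlib

section
/- Let p be an odd prime, k a natural number, and a, n natural numbers with a < p^n. Then ‖μ_{x^k,-1}(a + p^n ℤ_p) − (-1)^a a^k‖_p ≤ p^{-n}, i.e., μ_{x^k,-1}(a + p^n ℤ_p) ≡ (-1)^a a^k (mod p^n). -/
open Finset Filter

lemma padic_norm_sum_le {p : ℕ} [Fact p.Prime] {ι : Type*} (s : Finset ι)
    (f : ι → ℚ_[p]) (C : ℝ) (hC : 0 ≤ C) (h : ∀ i ∈ s, ‖f i‖ ≤ C) :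
    ‖∑ i ∈ s, f i‖ ≤ C := by
  classical
  revert h
  induction s using Finset.cons_induction with
  | empty => intro _; simpa using hC
  | cons x s hx ih =>
    intro h
    rw [Finset.sum_cons]
    exact le_trans (Padic.nonarchimedean _ _) (max_le
      (h x (Finset.mem_cons_self _ _))
      (ih fun i hi => h i (Finset.mem_cons_of_mem hi)))

theorem fermionic_measure_monomial_congr (p : ℕ) [hp : Fact p.Prime] (hodd : Odd p)
    (k a n : ℕ) (ha : a < p ^ n) (μv : ℚ_[p])
    (hμ : Tendsto (fun m => ∑ x ∈ Finset.range (p ^ (m - n)),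
        (-1 : ℚ_[p]) ^ (a + x) * ((a : ℚ_[p]) + (p : ℚ_[p]) ^ n * (x : ℚ_[p])) ^ k)
      atTop (nhds μv)) :
    ‖μv - (-1 : ℚ_[p]) ^ a * (a : ℚ_[p]) ^ k‖ ≤ (p : ℝ) ^ (-(n : ℤ)) := by
  set c : ℚ_[p] := (-1 : ℚ_[p]) ^ a * (a : ℚ_[p]) ^ k with hc
  have htend : Tendsto (fun m => ‖(∑ x ∈ Finset.range (p ^ (m - n)),
      (-1 : ℚ_[p]) ^ (a + x) * ((a : ℚ_[p]) + (p : ℚ_[p]) ^ n * (x : ℚ_[p])) ^ k) - c‖)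
      atTop (nhds ‖μv - c‖) :=
    ((hμ.sub tendsto_const_nhds).norm)
  refine le_of_tendsto htend (Filter.Eventually.of_forall fun m => ?_)
  -- bound each partial sum
  set N := p ^ (m - n) with hN
  have hNodd : Odd N := hodd.pow
  -- split the sum
  have hsplit : (∑ x ∈ Finset.range N,
      (-1 : ℚ_[p]) ^ (a + x) * ((a : ℚ_[p]) + (p : ℚ_[p]) ^ n * (x : ℚ_[p])) ^ k) - c
      = ∑ x ∈ Finset.range N,
        (-1 : ℚ_[p]) ^ (a + x) * (((a : ℚ_[p]) + (p : ℚ_[p]) ^ n * (x : ℚ_[p])) ^ k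
          - (a : ℚ_[p]) ^ k) := by
    have h1 : ∑ x ∈ Finset.range N, (-1 : ℚ_[p]) ^ (a + x) * (a : ℚ_[p]) ^ k = c := by
      have : ∑ x ∈ Finset.range N, (-1 : ℚ_[p]) ^ (a + x) * (a : ℚ_[p]) ^ k
          = (-1 : ℚ_[p]) ^ a * (a : ℚ_[p]) ^ k * ∑ x ∈ Finset.range N, (-1 : ℚ_[p]) ^ x := by
        rw [Finset.mul_sum]
        refine Finset.sum_congr rfl fun x _ => ?_
        rw [pow_add]; ring
      rw [this, neg_one_geom_sum, if_neg (Nat.not_even_iff_odd.mpr hNodd), mul_one]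
    calc (∑ x ∈ Finset.range N,
        (-1 : ℚ_[p]) ^ (a + x) * ((a : ℚ_[p]) + (p : ℚ_[p]) ^ n * (x : ℚ_[p])) ^ k) - c
        = ∑ x ∈ Finset.range N,
          ((-1 : ℚ_[p]) ^ (a + x) * ((a : ℚ_[p]) + (p : ℚ_[p]) ^ n * (x : ℚ_[p])) ^ k
            - (-1 : ℚ_[p]) ^ (a + x) * (a : ℚ_[p]) ^ k) := by
          rw [Finset.sum_sub_distrib, h1]
      _ = _ := by refine Finset.sum_congr rfl fun x _ => ?_; ring
  rw [hsplit]
  refine padic_norm_sum_le _ _ _ (by positivity) fun x _ => ?_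
  rw [norm_mul]
  have h1 : ‖(-1 : ℚ_[p]) ^ (a + x)‖ = 1 := by
    rw [norm_pow, norm_neg, norm_one, one_pow]
  rw [h1, one_mul]
  -- the difference is a cast of an integer divisible by p^n
  have hdvd : ((p : ℤ) ^ n) ∣ ((a + p ^ n * x : ℤ) ^ k - (a : ℤ) ^ k) := by
    refine dvd_trans ?_ (sub_dvd_pow_sub_pow _ _ k)
    simp
  obtain ⟨t, ht⟩ := hdvd
  have hcast : ((a : ℚ_[p]) + (p : ℚ_[p]) ^ n * (x : ℚ_[p])) ^ k - (a : ℚ_[p]) ^ k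
      = ((p : ℚ_[p]) ^ n) * (t : ℚ_[p]) := by
    have := congrArg (fun z : ℤ => (z : ℚ_[p])) ht
    push_cast at this ⊢
    linear_combination this
  rw [hcast, norm_mul, norm_pow]
  calc ‖(p : ℚ_[p])‖ ^ n * ‖(t : ℚ_[p])‖ ≤ ‖(p : ℚ_[p])‖ ^ n * 1 := by
        refine mul_le_mul_of_nonneg_left (Padic.norm_int_le_one t) (by positivity)
    _ = (p : ℝ) ^ (-(n : ℤ)) := by
        rw [mul_one, Padic.norm_p, inv_pow, ← zpow_natCast, ← zpow_neg]
end

section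
/- Let p be an odd prime, k a natural number, and a ∈ ℕ. Then the Radon–Nikodym-type limit f_{μ_{x^k,-1}}(a) := lim_{n→∞} μ_{x^k,-1}(a mod p^n + p^n ℤ_p) exists and equals (-1)^a · a^k. -/
open Finset Filter

theorem fermionic_RN_derivative_monomial (p : ℕ) [hp : Fact p.Prime] (hodd : Odd p)
    (k a : ℕ) (μ : ℕ → ℚ_[p])
    (hμ : ∀ n, Tendsto (fun m => ∑ x ∈ Finset.range (p ^ (m - n)),
        (-1 : ℚ_[p]) ^ (a % p ^ n + x)
          * (((a % p ^ n : ℕ) : ℚ_[p]) + (p : ℚ_[p]) ^ n * (x : ℚ_[p])) ^ k)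
      atTop (nhds (μ n))) :
    Tendsto μ atTop (nhds ((-1 : ℚ_[p]) ^ a * (a : ℚ_[p]) ^ k)) := by
  set c : ℚ_[p] := (-1 : ℚ_[p]) ^ a * (a : ℚ_[p]) ^ k with hc
  rw [tendsto_iff_norm_sub_tendsto_zero]
  have hp1 : (1 : ℝ) < (p : ℝ) := by exact_mod_cast hp.out.one_lt
  have hb : Tendsto (fun n : ℕ => ‖(p : ℚ_[p])‖ ^ n) atTop (nhds 0) := by
    apply tendsto_pow_atTop_nhds_zero_of_lt_one (norm_nonneg _)
    exact Padic.norm_p_lt_one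
  refine squeeze_zero' (Eventually.of_forall fun n => norm_nonneg _) ?_ hb
  -- eventually a < p ^ n
  have hev : ∀ᶠ n : ℕ in atTop, a < p ^ n := by
    filter_upwards [eventually_ge_atTop a] with n hn
    calc a < p ^ a := Nat.lt_pow_self hp.out.one_lt
      _ ≤ p ^ n := Nat.pow_le_pow_right hp.out.pos hn
  filter_upwards [hev] with n hn
  -- show ‖μ n - c‖ ≤ ‖p‖ ^ n
  have hmod : a % p ^ n = a := Nat.mod_eq_of_lt hn
  have hS : ∀ m : ℕ,
      ‖(∑ x ∈ Finset.range (p ^ (m - n)),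
        (-1 : ℚ_[p]) ^ (a % p ^ n + x)
          * (((a % p ^ n : ℕ) : ℚ_[p]) + (p : ℚ_[p]) ^ n * (x : ℚ_[p])) ^ k) - c‖
        ≤ ‖(p : ℚ_[p])‖ ^ n := by
    intro m
    rw [hmod]
    have hodd' : Odd (p ^ (m - n)) := hodd.pow
    have hgeom : ∑ x ∈ Finset.range (p ^ (m - n)), (-1 : ℚ_[p]) ^ x = 1 := by
      rw [neg_one_geom_sum, if_neg (Nat.not_even_iff_odd.2 hodd')]
    have key : (∑ x ∈ Finset.range (p ^ (m - n)),
        (-1 : ℚ_[p]) ^ (a + x)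
          * (((a : ℕ) : ℚ_[p]) + (p : ℚ_[p]) ^ n * (x : ℚ_[p])) ^ k) - c
        = ∑ x ∈ Finset.range (p ^ (m - n)),
          (-1 : ℚ_[p]) ^ (a + x)
            * ((((a : ℕ) : ℚ_[p]) + (p : ℚ_[p]) ^ n * (x : ℚ_[p])) ^ k - (a : ℚ_[p]) ^ k) := by
      rw [Finset.sum_congr rfl (fun x _ => by ring : ∀ x ∈ Finset.range (p ^ (m - n)),
        (-1 : ℚ_[p]) ^ (a + x)
            * ((((a : ℕ) : ℚ_[p]) + (p : ℚ_[p]) ^ n * (x : ℚ_[p])) ^ k - (a : ℚ_[p]) ^ k)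
        = (-1 : ℚ_[p]) ^ (a + x)
          * (((a : ℕ) : ℚ_[p]) + (p : ℚ_[p]) ^ n * (x : ℚ_[p])) ^ k
          - ((-1 : ℚ_[p]) ^ a * (a : ℚ_[p]) ^ k) * (-1 : ℚ_[p]) ^ x), Finset.sum_sub_distrib,
        ← Finset.mul_sum, hgeom, mul_one]
    rw [key]
    refine IsUltrametricDist.norm_sum_le_of_forall_le_of_nonneg
      (by positivity) (fun x _ => ?_)
    have hterm : ((a : ℚ_[p]) + (p : ℚ_[p]) ^ n * (x : ℚ_[p])) ^ k - (a : ℚ_[p]) ^ k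
        = ((((a : ℤ) + (p : ℤ) ^ n * (x : ℤ)) ^ k - (a : ℤ) ^ k : ℤ) : ℚ_[p]) := by
      push_cast; ring
    rw [norm_mul, norm_pow, norm_neg, norm_one, one_pow, one_mul, hterm]
    have hdvd : ((p : ℤ) ^ n) ∣ (((a : ℤ) + (p : ℤ) ^ n * (x : ℤ)) ^ k - (a : ℤ) ^ k) := by
      have h1 : ((p : ℤ) ^ n) ∣ ((a : ℤ) + (p : ℤ) ^ n * (x : ℤ) - (a : ℤ)) := ⟨x, by ring⟩
      exact h1.trans (sub_dvd_pow_sub_pow _ _ k)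
    have := (Padic.norm_int_le_pow_iff_dvd (p := p)
      (((a : ℤ) + (p : ℤ) ^ n * (x : ℤ)) ^ k - (a : ℤ) ^ k) n).2 hdvd
    refine this.trans (le_of_eq ?_)
    rw [Padic.norm_p, ← zpow_natCast, zpow_neg, inv_zpow]
  exact le_of_tendsto ((hμ n).sub_const c).norm (Eventually.of_forall hS)
end

section
/- Let p be an odd prime and k a natural number. For every continuous function g : ℤ_p → ℚ_p, the integral of g against the measure μ_{x^k,-1} equals the fermionic integral of g(x)·x^k: lim_{n→∞} ∑_{i=0}^{p^n-1} g(i)·μ_{x^k,-1}(i + p^n ℤ_p) = lim_{n→∞} ∑_{i=0}^{p^n-1} g(i)·i^k·(-1)^i, provided the right-hand limit exists. -/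
open Finset Filter

private lemma sum_range_decompose {M : Type*} [AddCommMonoid M] (a b : ℕ) (f : ℕ → ℕ → M) :
    ∑ i ∈ Finset.range a, ∑ x ∈ Finset.range b, f i x
      = ∑ j ∈ Finset.range (a * b), f (j % a) (j / a) := by
  rw [← Finset.sum_product']
  refine Finset.sum_nbij' (fun q => q.1 + a * q.2) (fun j => (j % a, j / a)) ?_ ?_ ?_ ?_ ?_
  · rintro ⟨i, x⟩ hq
    simp only [Finset.mem_product, Finset.mem_range] at hq
    simp only [Finset.mem_range]
    calc i + a * x < a + a * x := by omega
      _ = a * (x + 1) := by ring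
      _ ≤ a * b := Nat.mul_le_mul_left _ hq.2
  · intro j hj
    simp only [Finset.mem_range] at hj
    have ha : 0 < a := Nat.pos_of_ne_zero (by rintro rfl; simp at hj)
    simp only [Finset.mem_product, Finset.mem_range]
    exact ⟨Nat.mod_lt _ ha, Nat.div_lt_of_lt_mul hj⟩
  · rintro ⟨i, x⟩ hq
    simp only [Finset.mem_product, Finset.mem_range] at hq
    have ha : 0 < a := Nat.pos_of_ne_zero (by rintro rfl; omega)
    simp [Nat.add_mul_mod_self_left, Nat.mod_eq_of_lt hq.1,
      Nat.add_mul_div_left _ _ ha, Nat.div_eq_of_lt hq.1]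
  · intro j _; exact Nat.mod_add_div j a
  · rintro ⟨i, x⟩ hq
    simp only [Finset.mem_product, Finset.mem_range] at hq
    have ha : 0 < a := Nat.pos_of_ne_zero (by rintro rfl; omega)
    rw [Nat.add_mul_mod_self_left, Nat.mod_eq_of_lt hq.1,
      Nat.add_mul_div_left _ _ ha, Nat.div_eq_of_lt hq.1, zero_add]

theorem integral_against_monomial_measure (p : ℕ) [hp : Fact p.Prime] (hodd : Odd p)
    (k : ℕ) (g : ℤ_[p] → ℚ_[p]) (hg : Continuous g)
    (μ : ℕ → ℕ → ℚ_[p])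
    (hμ : ∀ n i : ℕ, Tendsto (fun m => ∑ x ∈ Finset.range (p ^ (m - n)),
        (-1 : ℚ_[p]) ^ (i + x) * ((i : ℚ_[p]) + (p : ℚ_[p]) ^ n * (x : ℚ_[p])) ^ k)
      atTop (nhds (μ n i)))
    (L : ℚ_[p])
    (hL : Tendsto (fun n => ∑ i ∈ Finset.range (p ^ n),
        g (i : ℤ_[p]) * (i : ℚ_[p]) ^ k * (-1 : ℚ_[p]) ^ i) atTop (nhds L)) :
    Tendsto (fun n => ∑ i ∈ Finset.range (p ^ n), g (i : ℤ_[p]) * μ n i)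
      atTop (nhds L) := by
  have hp1 : (1 : ℝ) < p := by exact_mod_cast hp.out.one_lt
  rw [NormedAddCommGroup.tendsto_atTop] at hL ⊢
  intro ε hε
  have hu := CompactSpace.uniformContinuous_of_continuous hg
  rw [Metric.uniformContinuous_iff] at hu
  obtain ⟨δ, hδ, hgd⟩ := hu (ε / 2) (by positivity)
  obtain ⟨N₁, hN₁⟩ : ∃ N : ℕ, ((p : ℝ)⁻¹) ^ N < δ :=
    exists_pow_lt_of_lt_one hδ (inv_lt_one_of_one_lt₀ hp1)
  obtain ⟨N₂, hN₂⟩ := hL (ε / 2) (by positivity)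
  refine ⟨max N₁ N₂, fun n hn => ?_⟩
  set C : ℕ → ℚ_[p] := fun m => ∑ i ∈ Finset.range (p ^ n),
      g (i : ℤ_[p]) * ∑ x ∈ Finset.range (p ^ (m - n)),
        (-1 : ℚ_[p]) ^ (i + x) * ((i : ℚ_[p]) + (p : ℚ_[p]) ^ n * (x : ℚ_[p])) ^ k with hCdef
  have hC : Tendsto C atTop
      (nhds (∑ i ∈ Finset.range (p ^ n), g (i : ℤ_[p]) * μ n i)) :=
    tendsto_finset_sum _ fun i _ => (hμ n i).const_mul _
  have key : ∀ᶠ m in atTop, ‖C m - L‖ ≤ ε / 2 := by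
    filter_upwards [eventually_ge_atTop (max n N₂)] with m hm
    have hmn : n ≤ m := le_trans (le_max_left _ _) hm
    have hmN₂ : N₂ ≤ m := le_trans (le_max_right _ _) hm
    have hre : C m = ∑ j ∈ Finset.range (p ^ m),
        g ((j % p ^ n : ℕ) : ℤ_[p]) * ((j : ℚ_[p]) ^ k * (-1 : ℚ_[p]) ^ j) := by
      rw [hCdef]
      simp only [Finset.mul_sum]
      rw [sum_range_decompose (p ^ n) (p ^ (m - n))
        (fun i x => g (i : ℤ_[p]) * ((-1 : ℚ_[p]) ^ (i + x)
          * ((i : ℚ_[p]) + (p : ℚ_[p]) ^ n * (x : ℚ_[p])) ^ k)),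
        ← pow_add, Nat.add_sub_cancel' hmn]
      refine Finset.sum_congr rfl fun j _ => ?_
      have hcast : ((j % p ^ n : ℕ) : ℚ_[p]) + (p : ℚ_[p]) ^ n * ((j / p ^ n : ℕ) : ℚ_[p])
          = (j : ℚ_[p]) := by
        conv_rhs => rw [← Nat.mod_add_div j (p ^ n)]
        push_cast
        ring
      have hsign : (-1 : ℚ_[p]) ^ j = (-1 : ℚ_[p]) ^ (j % p ^ n + j / p ^ n) := by
        conv_lhs => rw [← Nat.mod_add_div j (p ^ n)]
        rw [pow_add, pow_add, pow_mul, (hodd.pow).neg_one_pow]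
      rw [hcast, hsign]
      ring
    rw [hre]
    have h1 : ‖(∑ j ∈ Finset.range (p ^ m),
          g ((j % p ^ n : ℕ) : ℤ_[p]) * ((j : ℚ_[p]) ^ k * (-1 : ℚ_[p]) ^ j))
        - ∑ j ∈ Finset.range (p ^ m),
          g (j : ℤ_[p]) * (j : ℚ_[p]) ^ k * (-1 : ℚ_[p]) ^ j‖ ≤ ε / 2 := by
      rw [← Finset.sum_sub_distrib]
      refine IsUltrametricDist.norm_sum_le_of_forall_le_of_nonneg (by positivity) fun j _ => ?_
      have heq : g ((j % p ^ n : ℕ) : ℤ_[p]) * ((j : ℚ_[p]) ^ k * (-1 : ℚ_[p]) ^ j)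
          - g (j : ℤ_[p]) * (j : ℚ_[p]) ^ k * (-1 : ℚ_[p]) ^ j
          = (g ((j % p ^ n : ℕ) : ℤ_[p]) - g (j : ℤ_[p]))
              * ((j : ℚ_[p]) ^ k * (-1 : ℚ_[p]) ^ j) := by ring
      rw [heq, norm_mul]
      have hb1 : ‖(j : ℚ_[p]) ^ k * (-1 : ℚ_[p]) ^ j‖ ≤ 1 := by
        rw [norm_mul, norm_pow, norm_pow, norm_neg, norm_one, one_pow, mul_one]
        refine pow_le_one₀ (norm_nonneg _) ?_
        exact_mod_cast Padic.norm_int_le_one (j : ℤ)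
      have hdist : dist ((j % p ^ n : ℕ) : ℤ_[p]) ((j : ℤ_[p])) < δ := by
        rw [dist_eq_norm]
        have hjeq : (j : ℤ_[p]) = ((j % p ^ n : ℕ) : ℤ_[p])
            + (p : ℤ_[p]) ^ n * ((j / p ^ n : ℕ) : ℤ_[p]) := by
          conv_lhs => rw [← Nat.mod_add_div j (p ^ n)]
          push_cast
          ring
        rw [hjeq]
        have : ((j % p ^ n : ℕ) : ℤ_[p]) - (((j % p ^ n : ℕ) : ℤ_[p])
            + (p : ℤ_[p]) ^ n * ((j / p ^ n : ℕ) : ℤ_[p]))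
            = -((p : ℤ_[p]) ^ n * ((j / p ^ n : ℕ) : ℤ_[p])) := by ring
        rw [this, norm_neg]
        calc ‖(p : ℤ_[p]) ^ n * ((j / p ^ n : ℕ) : ℤ_[p])‖
            ≤ ‖(p : ℤ_[p]) ^ n‖ * ‖((j / p ^ n : ℕ) : ℤ_[p])‖ := norm_mul_le _ _
          _ ≤ ‖(p : ℤ_[p]) ^ n‖ * 1 :=
              mul_le_mul_of_nonneg_left (PadicInt.norm_le_one _) (norm_nonneg _)
          _ = ((p : ℝ)⁻¹) ^ n := by
              rw [mul_one, PadicInt.norm_p_pow, zpow_neg, zpow_natCast, ← inv_pow]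
          _ ≤ ((p : ℝ)⁻¹) ^ N₁ := by
              refine pow_le_pow_of_le_one (by positivity) (inv_le_one_of_one_le₀ hp1.le) ?_
              exact le_trans (le_max_left _ _) hn
          _ < δ := hN₁
      have := hgd hdist
      rw [dist_eq_norm] at this
      calc ‖g ((j % p ^ n : ℕ) : ℤ_[p]) - g (j : ℤ_[p])‖
            * ‖(j : ℚ_[p]) ^ k * (-1 : ℚ_[p]) ^ j‖
          ≤ ‖g ((j % p ^ n : ℕ) : ℤ_[p]) - g (j : ℤ_[p])‖ * 1 :=
            mul_le_mul_of_nonneg_left hb1 (norm_nonneg _)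
        _ ≤ ε / 2 := by rw [mul_one]; exact this.le
    have h2 : ‖(∑ j ∈ Finset.range (p ^ m),
        g (j : ℤ_[p]) * (j : ℚ_[p]) ^ k * (-1 : ℚ_[p]) ^ j) - L‖ ≤ ε / 2 :=
      (hN₂ m hmN₂).le
    calc ‖(∑ j ∈ Finset.range (p ^ m),
          g ((j % p ^ n : ℕ) : ℤ_[p]) * ((j : ℚ_[p]) ^ k * (-1 : ℚ_[p]) ^ j)) - L‖
        = ‖((∑ j ∈ Finset.range (p ^ m),
            g ((j % p ^ n : ℕ) : ℤ_[p]) * ((j : ℚ_[p]) ^ k * (-1 : ℚ_[p]) ^ j))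
          - ∑ j ∈ Finset.range (p ^ m),
            g (j : ℤ_[p]) * (j : ℚ_[p]) ^ k * (-1 : ℚ_[p]) ^ j)
          + ((∑ j ∈ Finset.range (p ^ m),
            g (j : ℤ_[p]) * (j : ℚ_[p]) ^ k * (-1 : ℚ_[p]) ^ j) - L)‖ := by
          rw [sub_add_sub_cancel]
      _ ≤ max _ _ := IsUltrametricDist.norm_add_le_max _ _
      _ ≤ ε / 2 := max_le h1 h2
  have hnorm : Tendsto (fun m => ‖C m - L‖) atTop
      (nhds ‖(∑ i ∈ Finset.range (p ^ n), g (i : ℤ_[p]) * μ n i) - L‖) :=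
    (hC.sub tendsto_const_nhds).norm
  have := le_of_tendsto hnorm key
  linarith
end

section
/- Let p be an odd prime and f : ℤ_p → ℚ_p a uniformly differentiable function (so that lim n·‖a_n‖_p = 0 for its Mahler coefficients). Then for every a ∈ ℕ, f_{μ_{f,-1}}(a) := lim_{n→∞} μ_{f,-1}(a mod p^n + p^n ℤ_p) exists and equals (-1)^a·f(a), where μ_{f,-1}(b + p^n ℤ_p) = lim_{m→∞} ∑_{x=0, x≡b mod p^n}^{p^m-1} f(x)(-1)^x. -/
open Finset Filter

/-- The Mahler binomial coefficient function `C(x, n) = x(x-1)⋯(x-n+1)/n!` on `ℤ_p`,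
with values in `ℚ_p`. -/
noncomputable def mahlerBinom (p : ℕ) [Fact p.Prime] (x : ℤ_[p]) (n : ℕ) : ℚ_[p] :=
  (∏ i ∈ Finset.range n, ((x : ℚ_[p]) - (i : ℚ_[p]))) / (n.factorial : ℚ_[p])

section Aux
variable {p : ℕ} [Fact p.Prime]

lemma mahlerBinom_natCast (b k : ℕ) :
    mahlerBinom p (b : ℤ_[p]) k = (b.choose k : ℚ_[p]) := by
  have hprod : ∏ i ∈ Finset.range k, (((b : ℤ_[p]) : ℚ_[p]) - (i : ℚ_[p]))
      = (b.descFactorial k : ℚ_[p]) := by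
    rcases le_or_gt k b with h | h
    · rw [Nat.descFactorial_eq_prod_range, Nat.cast_prod]
      refine Finset.prod_congr rfl fun i hi => ?_
      rw [Nat.cast_sub (le_trans (Finset.mem_range.1 hi).le h)]
      push_cast
      ring
    · rw [Nat.descFactorial_eq_zero_iff_lt.2 h, Nat.cast_zero]
      refine Finset.prod_eq_zero (Finset.mem_range.2 h) ?_
      push_cast
      ring
  rw [mahlerBinom, hprod, Nat.descFactorial_eq_factorial_mul_choose]
  push_cast
  rw [mul_comm, mul_div_assoc, div_self (show ((k.factorial : ℚ_[p]) ≠ 0) by exact_mod_cast Nat.factorial_ne_zero k), mul_one]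

lemma norm_mahlerBinom_natCast_le (b k : ℕ) : ‖mahlerBinom p (b : ℤ_[p]) k‖ ≤ 1 := by
  rw [mahlerBinom_natCast]
  have := Padic.norm_int_le_one (p := p) (b.choose k : ℤ)
  simpa using this

lemma norm_natCast_le_one (b : ℕ) : ‖(b : ℚ_[p])‖ ≤ 1 := by
  have := Padic.norm_int_le_one (p := p) (b : ℤ)
  simpa using this

lemma norm_prod_sub_prod_le (A B : ℕ) (k : ℕ) :
    ‖(∏ i ∈ Finset.range k, ((A : ℚ_[p]) - (i : ℚ_[p]))) -
      ∏ i ∈ Finset.range k, ((B : ℚ_[p]) - (i : ℚ_[p]))‖ ≤ ‖(A : ℚ_[p]) - (B : ℚ_[p])‖ := by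
  induction k with
  | zero => simp
  | succ k ih =>
    rw [Finset.prod_range_succ, Finset.prod_range_succ]
    have key : (∏ i ∈ range k, ((A:ℚ_[p]) - i)) * ((A:ℚ_[p]) - k)
        - (∏ i ∈ range k, ((B:ℚ_[p]) - i)) * ((B:ℚ_[p]) - k)
        = ((∏ i ∈ range k, ((A:ℚ_[p]) - i)) - ∏ i ∈ range k, ((B:ℚ_[p]) - i)) * ((A:ℚ_[p]) - k)
          + (∏ i ∈ range k, ((B:ℚ_[p]) - i)) * ((A:ℚ_[p]) - (B:ℚ_[p])) := by ring
    rw [key]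
    refine le_trans (IsUltrametricDist.norm_add_le_max _ _) (max_le ?_ ?_)
    · rw [norm_mul]
      have h1 : ‖(A : ℚ_[p]) - (k : ℚ_[p])‖ ≤ 1 := by
        have := Padic.norm_int_le_one (p := p) ((A : ℤ) - (k : ℤ))
        simpa using this
      calc ‖_ - _‖ * ‖(A:ℚ_[p]) - (k:ℚ_[p])‖ ≤ ‖(A:ℚ_[p]) - (B:ℚ_[p])‖ * 1 :=
            mul_le_mul ih h1 (norm_nonneg _) (norm_nonneg _)
        _ = _ := mul_one _
    · rw [norm_mul]
      have h2 : ‖∏ i ∈ range k, ((B:ℚ_[p]) - (i:ℚ_[p]))‖ ≤ 1 := by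
        rw [norm_prod]
        refine Finset.prod_le_one (fun i _ => norm_nonneg _) (fun i _ => ?_)
        have := Padic.norm_int_le_one (p := p) ((B : ℤ) - (i : ℤ))
        simpa using this
      calc ‖_‖ * ‖(A:ℚ_[p]) - (B:ℚ_[p])‖ ≤ 1 * ‖(A:ℚ_[p]) - (B:ℚ_[p])‖ :=
            mul_le_mul_of_nonneg_right h2 (norm_nonneg _)
        _ = _ := one_mul _

lemma cont_at (f : ℤ_[p] → ℚ_[p]) (c : ℕ → ℚ_[p])
    (hf : ∀ x : ℤ_[p], Tendsto (fun N => ∑ n ∈ Finset.range (N + 1),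
        c n * mahlerBinom p x n) atTop (nhds (f x)))
    (hc : Tendsto (fun k => ‖c k‖) atTop (nhds 0))
    (a : ℕ) {ε : ℝ} (hε : 0 < ε) :
    ∃ n0 : ℕ, ∀ n ≥ n0, ∀ y : ℕ,
      ‖f ((a + p ^ n * y : ℕ) : ℤ_[p]) - f (a : ℤ_[p])‖ ≤ ε := by
  obtain ⟨K, hKd⟩ := Metric.tendsto_atTop.mp hc ε hε
  have hK : ∀ k, K ≤ k → ‖c k‖ ≤ ε := fun k hk => by
    have := hKd k hk
    rw [Real.dist_eq, sub_zero, abs_of_nonneg (norm_nonneg _)] at this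
    exact this.le
  obtain ⟨B, hB0, hBk⟩ : ∃ B : ℝ, 0 < B ∧
      ∀ k, k < K → ‖c k‖ * ‖((k.factorial : ℚ_[p]))⁻¹‖ ≤ B := by
    refine ⟨(∑ k ∈ Finset.range K, ‖c k‖ * ‖((k.factorial : ℚ_[p]))⁻¹‖) + 1, ?_, fun k hk => ?_⟩
    · have : (0:ℝ) ≤ ∑ k ∈ Finset.range K, ‖c k‖ * ‖((k.factorial : ℚ_[p]))⁻¹‖ :=
        Finset.sum_nonneg fun i _ => mul_nonneg (norm_nonneg _) (norm_nonneg _)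
      linarith
    · have h1 : ‖c k‖ * ‖((k.factorial : ℚ_[p]))⁻¹‖
          ≤ ∑ j ∈ Finset.range K, ‖c j‖ * ‖((j.factorial : ℚ_[p]))⁻¹‖ :=
        Finset.single_le_sum (f := fun j => ‖c j‖ * ‖((j.factorial : ℚ_[p]))⁻¹‖)
          (fun i _ => mul_nonneg (norm_nonneg _) (norm_nonneg _)) (Finset.mem_range.2 hk)
      linarith
  have hp1 : (1:ℝ) < p := by exact_mod_cast (Fact.out : p.Prime).one_lt
  have hlim : Tendsto (fun n : ℕ => ((p:ℝ)⁻¹) ^ n * B) atTop (nhds 0) := by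
    have h := tendsto_pow_atTop_nhds_zero_of_lt_one
      (le_of_lt (inv_pos.mpr (by linarith))) (inv_lt_one_of_one_lt₀ hp1)
    simpa using h.mul_const B
  obtain ⟨n0, hn0⟩ := Metric.tendsto_atTop.mp hlim ε hε
  have hn0' : ∀ n, n0 ≤ n → ((p:ℝ)⁻¹) ^ n * B ≤ ε := fun n hn => by
    have := hn0 n hn
    rw [Real.dist_eq, sub_zero, abs_of_nonneg (by positivity)] at this
    exact this.le
  refine ⟨n0, fun n hn y => ?_⟩
  obtain ⟨b, hbdef⟩ : ∃ b : ℕ, b = a + p ^ n * y := ⟨_, rfl⟩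
  rw [← hbdef]
  have hba : ‖((b:ℚ_[p])) - (a:ℚ_[p])‖ ≤ ((p:ℝ)⁻¹) ^ n := by
    have hcast : (b:ℚ_[p]) - (a:ℚ_[p]) = (p:ℚ_[p])^n * (y:ℚ_[p]) := by
      rw [hbdef]; push_cast; ring
    rw [hcast, norm_mul, norm_pow, Padic.norm_p]
    calc ((p:ℝ)⁻¹) ^ n * ‖(y:ℚ_[p])‖ ≤ ((p:ℝ)⁻¹) ^ n * 1 :=
          mul_le_mul_of_nonneg_left (norm_natCast_le_one y) (by positivity)
      _ = _ := mul_one _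
  have hbound : ∀ N : ℕ, ‖(∑ k ∈ Finset.range (N+1), c k * mahlerBinom p (b : ℤ_[p]) k)
      - ∑ k ∈ Finset.range (N+1), c k * mahlerBinom p (a : ℤ_[p]) k‖ ≤ ε := by
    intro N
    rw [← Finset.sum_sub_distrib]
    refine IsUltrametricDist.norm_sum_le_of_forall_le_of_nonneg hε.le (fun k _ => ?_)
    rw [← mul_sub, norm_mul]
    rcases lt_or_ge k K with hk | hk
    · have hdiff : ‖mahlerBinom p (b : ℤ_[p]) k - mahlerBinom p (a : ℤ_[p]) k‖
          ≤ ((p:ℝ)⁻¹)^n * ‖((k.factorial : ℚ_[p]))⁻¹‖ := by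
        rw [mahlerBinom, mahlerBinom, div_eq_mul_inv, div_eq_mul_inv, ← sub_mul, norm_mul,
          PadicInt.coe_natCast, PadicInt.coe_natCast]
        exact mul_le_mul (le_trans (norm_prod_sub_prod_le b a k) hba) le_rfl (norm_nonneg _)
          (by positivity)
      calc ‖c k‖ * ‖mahlerBinom p (b : ℤ_[p]) k - mahlerBinom p (a : ℤ_[p]) k‖
          ≤ ‖c k‖ * (((p:ℝ)⁻¹)^n * ‖((k.factorial : ℚ_[p]))⁻¹‖) :=
            mul_le_mul_of_nonneg_left hdiff (norm_nonneg _)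
        _ = ((p:ℝ)⁻¹)^n * (‖c k‖ * ‖((k.factorial : ℚ_[p]))⁻¹‖) := by ring
        _ ≤ ((p:ℝ)⁻¹)^n * B := mul_le_mul_of_nonneg_left (hBk k hk) (by positivity)
        _ ≤ ε := hn0' n hn
    · rw [mahlerBinom_natCast, mahlerBinom_natCast]
      have h1 : ‖((b.choose k : ℚ_[p])) - (a.choose k : ℚ_[p])‖ ≤ 1 := by
        have := Padic.norm_int_le_one (p := p) ((b.choose k : ℤ) - (a.choose k : ℤ))
        simpa using this
      calc ‖c k‖ * ‖((b.choose k : ℚ_[p])) - (a.choose k : ℚ_[p])‖ ≤ ε * 1 :=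
            mul_le_mul (hK k hk) h1 (norm_nonneg _) hε.le
        _ = ε := mul_one _
  have hten := ((hf (b : ℤ_[p])).sub (hf (a : ℤ_[p]))).norm
  exact le_of_tendsto hten (Eventually.of_forall hbound)

end Aux

theorem fermionic_RN_derivative_UD (p : ℕ) [hp : Fact p.Prime] (hodd : Odd p)
    (f : ℤ_[p] → ℚ_[p]) (c : ℕ → ℚ_[p])
    (hf : ∀ x : ℤ_[p], Tendsto (fun N => ∑ n ∈ Finset.range (N + 1),
        c n * mahlerBinom p x n) atTop (nhds (f x)))
    (hUD : Tendsto (fun n : ℕ => (n : ℝ) * ‖c n‖) atTop (nhds 0))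
    (a : ℕ) (μ : ℕ → ℚ_[p])
    (hμ : ∀ n, Tendsto (fun m => ∑ x ∈ Finset.range (p ^ m),
        if x % p ^ n = a % p ^ n then f (x : ℤ_[p]) * (-1 : ℚ_[p]) ^ x else 0)
      atTop (nhds (μ n))) :
    Tendsto μ atTop (nhds ((-1 : ℚ_[p]) ^ a * f (a : ℤ_[p]))) := by
  have hc : Tendsto (fun k => ‖c k‖) atTop (nhds 0) := by
    apply squeeze_zero' (Eventually.of_forall fun k => norm_nonneg _) ?_ hUD
    filter_upwards [eventually_ge_atTop 1] with k hk
    calc ‖c k‖ = 1 * ‖c k‖ := (one_mul _).symm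
      _ ≤ (k : ℝ) * ‖c k‖ :=
        mul_le_mul_of_nonneg_right (by exact_mod_cast hk) (norm_nonneg _)
  rw [NormedAddCommGroup.tendsto_atTop]
  intro ε hε
  obtain ⟨n0, hn0⟩ := cont_at f c hf hc a (half_pos hε)
  refine ⟨max n0 a, fun n hn => ?_⟩
  have hn1 : n0 ≤ n := le_trans (le_max_left _ _) hn
  have hna : a ≤ n := le_trans (le_max_right _ _) hn
  have hppos : 0 < p ^ n := pow_pos hp.out.pos n
  have hap : a < p ^ n :=
    lt_of_lt_of_le (Nat.lt_pow_self (n := a) hp.out.one_lt) (Nat.pow_le_pow_right hp.out.pos hna)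
  have hmod : a % p ^ n = a := Nat.mod_eq_of_lt hap
  have key : ∀ m, n ≤ m → ‖(∑ x ∈ Finset.range (p ^ m),
      if x % p ^ n = a % p ^ n then f (x : ℤ_[p]) * (-1 : ℚ_[p]) ^ x else 0)
      - (-1 : ℚ_[p]) ^ a * f (a : ℤ_[p])‖ ≤ ε / 2 := by
    intro m hm
    have hpow : p ^ n * p ^ (m - n) = p ^ m := by
      rw [← pow_add, Nat.add_sub_cancel' hm]
    have step1 : (∑ x ∈ Finset.range (p ^ m),
        if x % p ^ n = a % p ^ n then f (x : ℤ_[p]) * (-1 : ℚ_[p]) ^ x else 0)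
        = ∑ y ∈ Finset.range (p ^ (m - n)),
            f ((a + p ^ n * y : ℕ) : ℤ_[p]) * (-1 : ℚ_[p]) ^ (a + p ^ n * y) := by
      rw [← Finset.sum_filter]
      refine Finset.sum_nbij' (i := fun x => x / p ^ n) (j := fun y => a + p ^ n * y)
        ?_ ?_ ?_ ?_ ?_
      · intro x hx
        rw [Finset.mem_filter, Finset.mem_range] at hx
        rw [Finset.mem_range, Nat.div_lt_iff_lt_mul hppos]
        calc x < p ^ m := hx.1
          _ = p ^ (m - n) * p ^ n := by rw [mul_comm]; exact hpow.symm
      · intro y hy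
        rw [Finset.mem_range] at hy
        rw [Finset.mem_filter, Finset.mem_range]
        constructor
        · calc a + p ^ n * y < p ^ n + p ^ n * y := by omega
            _ = p ^ n * (y + 1) := by ring
            _ ≤ p ^ n * p ^ (m - n) := Nat.mul_le_mul_left _ (by omega)
            _ = p ^ m := hpow
        · rw [Nat.add_mul_mod_self_left]
      · intro x hx
        rw [Finset.mem_filter] at hx
        have h1 : x % p ^ n = a := by rw [hx.2, hmod]
        have h2 := Nat.mod_add_div x (p ^ n)
        show a + p ^ n * (x / p ^ n) = x
        omega
      · intro y _
        show (a + p ^ n * y) / p ^ n = y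
        rw [Nat.add_mul_div_left _ _ hppos, Nat.div_eq_of_lt hap, zero_add]
      · intro x hx
        rw [Finset.mem_filter] at hx
        have h1 : x % p ^ n = a := by rw [hx.2, hmod]
        have h2 := Nat.mod_add_div x (p ^ n)
        have h3 : a + p ^ n * (x / p ^ n) = x := by omega
        rw [h3]
    have hoddpn : Odd (p ^ n) := hodd.pow
    have step2 : ∀ y : ℕ, f ((a + p ^ n * y : ℕ) : ℤ_[p]) * (-1 : ℚ_[p]) ^ (a + p ^ n * y)
        = (-1 : ℚ_[p]) ^ a * ((-1 : ℚ_[p]) ^ y * f ((a + p ^ n * y : ℕ) : ℤ_[p])) := by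
      intro y
      rw [pow_add, pow_mul, hoddpn.neg_one_pow]
      ring
    have hsum1 : ∑ y ∈ Finset.range (p ^ (m - n)), (-1 : ℚ_[p]) ^ y = 1 := by
      rw [neg_one_geom_sum, if_neg (Nat.not_even_iff_odd.mpr hodd.pow)]
    have expand : ∑ y ∈ Finset.range (p ^ (m - n)),
          (-1 : ℚ_[p]) ^ y * f ((a + p ^ n * y : ℕ) : ℤ_[p])
        = f (a : ℤ_[p]) + ∑ y ∈ Finset.range (p ^ (m - n)),
            (-1 : ℚ_[p]) ^ y * (f ((a + p ^ n * y : ℕ) : ℤ_[p]) - f (a : ℤ_[p])) := by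
      simp only [mul_sub]
      rw [Finset.sum_sub_distrib, ← Finset.sum_mul, hsum1, one_mul]
      ring
    rw [step1]
    rw [Finset.sum_congr rfl (fun y _ => step2 y), ← Finset.mul_sum, expand]
    have halg : (-1 : ℚ_[p]) ^ a * (f (a : ℤ_[p]) + ∑ y ∈ Finset.range (p ^ (m - n)),
          (-1 : ℚ_[p]) ^ y * (f ((a + p ^ n * y : ℕ) : ℤ_[p]) - f (a : ℤ_[p])))
        - (-1 : ℚ_[p]) ^ a * f (a : ℤ_[p])
        = (-1 : ℚ_[p]) ^ a * ∑ y ∈ Finset.range (p ^ (m - n)),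
            (-1 : ℚ_[p]) ^ y * (f ((a + p ^ n * y : ℕ) : ℤ_[p]) - f (a : ℤ_[p])) := by
      ring
    rw [halg, norm_mul, norm_pow, norm_neg, norm_one, one_pow, one_mul]
    refine IsUltrametricDist.norm_sum_le_of_forall_le_of_nonneg (half_pos hε).le
      (fun y _ => ?_)
    rw [norm_mul, norm_pow, norm_neg, norm_one, one_pow, one_mul]
    exact hn0 n hn1 y
  have hle : ‖μ n - (-1 : ℚ_[p]) ^ a * f (a : ℤ_[p])‖ ≤ ε / 2 := by
    refine le_of_tendsto (((hμ n).sub tendsto_const_nhds).norm) ?_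
    filter_upwards [eventually_ge_atTop n] with m hm using key m hm
  exact lt_of_le_of_lt hle (by linarith)
end

section
/- Let p be an odd prime. For any natural numbers k ≥ 1 and m ≥ n, the difference ∑_{i=0}^{p^{m+1}-1}(-1)^i i^k − ∑_{i=0}^{p^m-1}(-1)^i i^k is divisible by p^m in ℤ, i.e., ‖∑_{i=0}^{p^{m+1}-1}(-1)^i i^k − ∑_{i=0}^{p^m-1}(-1)^i i^k‖_p ≤ p^{-m}. -/
open Finset Filter

private lemma alt_sum_blocks (N k : ℕ) (hN : Odd N) (q : ℕ) :
    (∑ i ∈ Finset.range (q * N), (-1 : ZMod N) ^ i * (i : ZMod N) ^ k) =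
      (∑ j ∈ Finset.range q, (-1 : ZMod N) ^ j) *
        ∑ i ∈ Finset.range N, (-1 : ZMod N) ^ i * (i : ZMod N) ^ k := by
  induction q with
  | zero => simp
  | succ q ih =>
    rw [Nat.succ_mul, Finset.sum_range_add, Finset.sum_range_succ, add_mul, ih]
    congr 1
    have : ∀ i ∈ Finset.range N,
        (-1 : ZMod N) ^ (q * N + i) * ((q * N + i : ℕ) : ZMod N) ^ k =
          (-1 : ZMod N) ^ q * ((-1 : ZMod N) ^ i * (i : ZMod N) ^ k) := by
      intro i _
      have h1 : (-1 : ZMod N) ^ (q * N + i) = (-1 : ZMod N) ^ q * (-1 : ZMod N) ^ i := by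
        rw [pow_add, pow_mul', Odd.neg_one_pow hN]
      have h2 : ((q * N + i : ℕ) : ZMod N) = (i : ZMod N) := by
        push_cast [ZMod.natCast_self]
        ring
      rw [h1, h2]
      ring
    rw [Finset.sum_congr rfl this, ← Finset.mul_sum]

theorem alt_power_sum_cauchy (p : ℕ) [hp : Fact p.Prime] (hodd : Odd p)
    (k : ℕ) (hk : 1 ≤ k) (m : ℕ) :
    ‖(∑ i ∈ Finset.range (p ^ (m + 1)), (-1 : ℚ_[p]) ^ i * (i : ℚ_[p]) ^ k)
      - ∑ i ∈ Finset.range (p ^ m), (-1 : ℚ_[p]) ^ i * (i : ℚ_[p]) ^ k‖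
      ≤ (p : ℝ) ^ (-(m : ℤ)) := by
  set N := p ^ m with hNdef
  have hNodd : Odd N := hodd.pow
  -- integer divisibility
  have hdvd : ((p : ℤ) ^ m) ∣
      ((∑ i ∈ Finset.range (p ^ (m + 1)), (-1 : ℤ) ^ i * (i : ℤ) ^ k)
        - ∑ i ∈ Finset.range N, (-1 : ℤ) ^ i * (i : ℤ) ^ k) := by
    have hcast : (((∑ i ∈ Finset.range (p ^ (m + 1)), (-1 : ℤ) ^ i * (i : ℤ) ^ k)
        - ∑ i ∈ Finset.range N, (-1 : ℤ) ^ i * (i : ℤ) ^ k : ℤ) : ZMod N) = 0 := by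
      push_cast
      have hsplit := alt_sum_blocks N k hNodd p
      have hpow : p ^ (m + 1) = p * N := by rw [hNdef, pow_succ, mul_comm]
      rw [hpow, hsplit, neg_one_geom_sum, if_neg (Nat.not_even_iff_odd.mpr hodd),
        one_mul, sub_self]
    have := (ZMod.intCast_zmod_eq_zero_iff_dvd _ N).mp hcast
    rwa [hNdef, Nat.cast_pow] at this
  -- transfer to the p-adic norm
  have hmain := (Padic.norm_int_le_pow_iff_dvd
      ((∑ i ∈ Finset.range (p ^ (m + 1)), (-1 : ℤ) ^ i * (i : ℤ) ^ k)
        - ∑ i ∈ Finset.range N, (-1 : ℤ) ^ i * (i : ℤ) ^ k) m).mpr hdvd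
  have hEq : (((∑ i ∈ Finset.range (p ^ (m + 1)), (-1 : ℤ) ^ i * (i : ℤ) ^ k)
      - ∑ i ∈ Finset.range N, (-1 : ℤ) ^ i * (i : ℤ) ^ k : ℤ) : ℚ_[p])
      = (∑ i ∈ Finset.range (p ^ (m + 1)), (-1 : ℚ_[p]) ^ i * (i : ℚ_[p]) ^ k)
        - ∑ i ∈ Finset.range N, (-1 : ℚ_[p]) ^ i * (i : ℚ_[p]) ^ k := by
    push_cast
    ring
  rwa [hEq] at hmain
end

section
/- Let p be an odd prime and f : ℤ_p → ℚ_p uniformly differentiable. For any continuous g : ℤ_p → ℚ_p, ∫_{ℤ_p} g dμ_{f,-1} = I_{-1}(f·g), i.e., lim_{n→∞} ∑_{i=0}^{p^n-1} g(i)·μ_{f,-1}(i + p^n ℤ_p) = lim_{n→∞} ∑_{i=0}^{p^n-1} f(i)·g(i)·(-1)^i, provided both limits exist. -/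
open Finset Filter

/-- `f : ℤ_p → ℚ_p` is uniformly differentiable: the difference quotients
converge uniformly to a derivative function. -/
def UniformlyDifferentiable (p : ℕ) [Fact p.Prime] (f : ℤ_[p] → ℚ_[p]) : Prop :=
  ∃ f' : ℤ_[p] → ℚ_[p], ∀ ε : ℝ, 0 < ε → ∃ δ : ℝ, 0 < δ ∧
    ∀ x y : ℤ_[p], x ≠ y → ‖x - y‖ < δ →
      ‖(f x - f y) / ((x : ℚ_[p]) - (y : ℚ_[p])) - f' x‖ < ε

lemma UD_continuous {p : ℕ} [Fact p.Prime] {f : ℤ_[p] → ℚ_[p]}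
    (h : UniformlyDifferentiable p f) : Continuous f := by
  obtain ⟨f', hf'⟩ := h
  rw [Metric.continuous_iff]
  intro x ε hε
  obtain ⟨δ₁, hδ₁, H⟩ := hf' 1 one_pos
  set C : ℝ := ‖f' x‖ + 1 with hC
  have hCpos : 0 < C := by positivity
  refine ⟨min δ₁ (ε / C), lt_min hδ₁ (by positivity), fun y hy => ?_⟩
  rcases eq_or_ne y x with rfl | hxy
  · simpa using hε
  · have hxy' : x ≠ y := Ne.symm hxy
    have hd0 : ((x : ℚ_[p]) - (y : ℚ_[p])) ≠ 0 := by
      rw [sub_ne_zero]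
      intro hxe
      exact hxy' (Subtype.coe_injective hxe)
    have hnxy : ‖x - y‖ = dist y x := by rw [dist_eq_norm, ← norm_neg]; ring_nf
    have h1 : ‖x - y‖ < δ₁ := by rw [hnxy]; exact hy.trans_le (min_le_left _ _)
    have h2 := H x y hxy' h1
    have hq : ‖(f x - f y) / ((x : ℚ_[p]) - (y : ℚ_[p]))‖ < C := by
      calc ‖(f x - f y) / ((x : ℚ_[p]) - (y : ℚ_[p]))‖
          ≤ ‖(f x - f y) / ((x : ℚ_[p]) - (y : ℚ_[p])) - f' x‖ + ‖f' x‖ := by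
            simpa using norm_add_le ((f x - f y) / ((x : ℚ_[p]) - (y : ℚ_[p])) - f' x) (f' x)
        _ < 1 + ‖f' x‖ := by linarith
        _ = C := by rw [hC]; ring
    have hdn : ‖((x : ℚ_[p]) - (y : ℚ_[p]))‖ = ‖x - y‖ := by
      rw [PadicInt.norm_def]; push_cast; ring_nf
    have key : ‖f x - f y‖ < C * ‖x - y‖ := by
      have : f x - f y = ((f x - f y) / ((x : ℚ_[p]) - (y : ℚ_[p]))) * ((x : ℚ_[p]) - (y : ℚ_[p])) := by
        field_simp
      rw [this, norm_mul, hdn]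
      have hpos : (0:ℝ) < ‖x - y‖ := by
        rw [norm_pos_iff, sub_ne_zero]; exact hxy'
      exact (mul_lt_mul_iff_left₀ hpos).mpr hq
    have hsmall : ‖x - y‖ < ε / C := by rw [hnxy]; exact hy.trans_le (min_le_right _ _)
    have : ‖f x - f y‖ < ε := by
      calc ‖f x - f y‖ < C * ‖x - y‖ := key
        _ < C * (ε / C) := by exact (mul_lt_mul_iff_right₀ hCpos).mpr hsmall
        _ = ε := by field_simp
    rw [dist_eq_norm, ← norm_neg]
    simpa [neg_sub] using this
lemma key_est {p : ℕ} [hp : Fact p.Prime] (hodd : Odd p) {f : ℤ_[p] → ℚ_[p]}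
    (hfu : UniformContinuous f) {ε : ℝ} (hε : 0 < ε) :
    ∃ N : ℕ, ∀ n, N ≤ n → ∀ i, i < p ^ n → ∀ m, n ≤ m →
      ‖(∑ x ∈ Finset.range (p ^ m),
        if x % p ^ n = i % p ^ n then f (x : ℤ_[p]) * (-1 : ℚ_[p]) ^ x else 0)
        - f (i : ℤ_[p]) * (-1 : ℚ_[p]) ^ i‖ ≤ ε := by
  obtain ⟨δ, hδ, hδf⟩ := Metric.uniformContinuous_iff.mp hfu ε hε
  have hp1 : (1:ℝ) < (p:ℝ) := by exact_mod_cast hp.out.one_lt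
  have hinv1 : ((p:ℝ))⁻¹ < 1 := by rw [inv_lt_one_iff₀]; right; exact hp1
  obtain ⟨N, hN⟩ := exists_pow_lt_of_lt_one hδ hinv1
  refine ⟨N, fun n hn i hi m hm => ?_⟩
  have hpn : 0 < p ^ n := pow_pos hp.out.pos n
  have hi' : i % p ^ n = i := Nat.mod_eq_of_lt hi
  set K := p ^ (m - n) with hK
  have hKpn : K * p ^ n = p ^ m := by
    rw [hK, ← pow_add, Nat.sub_add_cancel hm]
  have hKodd : Odd K := hodd.pow
  -- Step 1: reindex the sum
  have step1 : (∑ x ∈ Finset.range (p ^ m),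
      if x % p ^ n = i % p ^ n then f (x : ℤ_[p]) * (-1 : ℚ_[p]) ^ x else 0)
      = ∑ j ∈ Finset.range K,
        f ((i + j * p ^ n : ℕ) : ℤ_[p]) * (-1 : ℚ_[p]) ^ (i + j * p ^ n) := by
    rw [← Finset.sum_filter]
    refine Finset.sum_nbij' (fun x => x / p ^ n) (fun j => i + j * p ^ n) ?_ ?_ ?_ ?_ ?_
    · intro x hx
      simp only [Finset.mem_filter, Finset.mem_range] at hx
      rw [Finset.mem_range]
      exact Nat.div_lt_of_lt_mul (by rw [mul_comm, hKpn]; exact hx.1)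
    · intro j hj
      rw [Finset.mem_range] at hj
      simp only [Finset.mem_filter, Finset.mem_range]
      constructor
      · calc i + j * p ^ n < p ^ n + j * p ^ n := by omega
          _ = (j + 1) * p ^ n := by ring
          _ ≤ K * p ^ n := Nat.mul_le_mul_right _ hj
          _ = p ^ m := hKpn
      · simp [Nat.add_mul_mod_self_right, hi', Nat.mod_eq_of_lt hi]
    · intro x hx
      simp only [Finset.mem_filter, Finset.mem_range] at hx
      have : x % p ^ n = i := by rw [hx.2, hi']
      conv_rhs => rw [← Nat.mod_add_div' x (p ^ n)]
      rw [this]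
    · intro j hj
      show (i + j * p ^ n) / p ^ n = j
      rw [Nat.add_mul_div_right _ _ hpn, Nat.div_eq_of_lt hi, zero_add]
    · intro x hx
      simp only [Finset.mem_filter, Finset.mem_range] at hx
      have hxx : i + x / p ^ n * p ^ n = x := by
        have : x % p ^ n = i := by rw [hx.2, hi']
        conv_rhs => rw [← Nat.mod_add_div' x (p ^ n)]
        rw [this]
      show f (x : ℤ_[p]) * (-1 : ℚ_[p]) ^ x
        = f (((i + x / p ^ n * p ^ n : ℕ)) : ℤ_[p]) * (-1 : ℚ_[p]) ^ (i + x / p ^ n * p ^ n)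
      rw [hxx]
  rw [step1]
  have hterm : ∀ j : ℕ, f ((i + j * p ^ n : ℕ) : ℤ_[p]) * (-1 : ℚ_[p]) ^ (i + j * p ^ n)
      = (-1:ℚ_[p]) ^ i * ((-1:ℚ_[p]) ^ j * f ((i + j * p ^ n : ℕ) : ℤ_[p])) := by
    intro j
    have h1 : ((-1:ℚ_[p])) ^ (j * p ^ n) = (-1:ℚ_[p]) ^ j := by
      rw [mul_comm, pow_mul, Odd.neg_one_pow (Odd.pow hodd)]
    rw [pow_add, h1]; ring
  have hgeo : (∑ j ∈ Finset.range K, ((-1:ℚ_[p])) ^ j) = 1 := by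
    rw [neg_one_geom_sum, if_neg (Nat.not_even_iff_odd.mpr hKodd)]
  have hsplit : (∑ j ∈ Finset.range K,
      f ((i + j * p ^ n : ℕ) : ℤ_[p]) * (-1 : ℚ_[p]) ^ (i + j * p ^ n))
      - f (i : ℤ_[p]) * (-1 : ℚ_[p]) ^ i
      = ∑ j ∈ Finset.range K, (-1:ℚ_[p])^i * ((-1:ℚ_[p])^j *
          (f ((i + j * p ^ n : ℕ) : ℤ_[p]) - f (i : ℤ_[p]))) := by
    have hconst : f (i : ℤ_[p]) * (-1 : ℚ_[p]) ^ i
        = ∑ j ∈ Finset.range K, (-1:ℚ_[p])^i * ((-1:ℚ_[p])^j * f (i : ℤ_[p])) := by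
      calc f (i : ℤ_[p]) * (-1 : ℚ_[p]) ^ i
          = (∑ j ∈ Finset.range K, ((-1:ℚ_[p])) ^ j) * ((-1:ℚ_[p])^i * f (i : ℤ_[p])) := by
            rw [hgeo]; ring
        _ = ∑ j ∈ Finset.range K, (-1:ℚ_[p])^j * ((-1:ℚ_[p])^i * f (i : ℤ_[p])) :=
            Finset.sum_mul _ _ _
        _ = _ := Finset.sum_congr rfl (fun j _ => by ring)
    rw [hconst, ← Finset.sum_sub_distrib]
    exact Finset.sum_congr rfl fun j _ => by rw [hterm j]; ring
  rw [hsplit]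
  apply IsUltrametricDist.norm_sum_le_of_forall_le_of_nonneg hε.le
  intro j hj
  have hnorm1 : ‖(-1:ℚ_[p])^i * ((-1:ℚ_[p])^j *
      (f ((i + j * p ^ n : ℕ) : ℤ_[p]) - f (i : ℤ_[p])))‖
      = ‖f ((i + j * p ^ n : ℕ) : ℤ_[p]) - f (i : ℤ_[p])‖ := by
    rw [norm_mul, norm_mul, norm_pow, norm_pow, norm_neg, norm_one]
    simp
  rw [hnorm1]
  have hdist : dist (((i + j * p ^ n : ℕ)) : ℤ_[p]) ((i : ℕ) : ℤ_[p]) < δ := by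
    have hsub : (((i + j * p ^ n : ℕ)) : ℤ_[p]) - ((i:ℕ) : ℤ_[p])
        = (j : ℤ_[p]) * (p:ℤ_[p])^n := by push_cast; ring
    rw [dist_eq_norm, hsub]
    calc ‖(j : ℤ_[p]) * (p:ℤ_[p])^n‖ ≤ ‖(j : ℤ_[p])‖ * ‖(p:ℤ_[p])^n‖ := norm_mul_le _ _
      _ ≤ 1 * ‖(p:ℤ_[p])^n‖ :=
          mul_le_mul_of_nonneg_right (PadicInt.norm_le_one (j : ℤ_[p])) (norm_nonneg _)
      _ = (p:ℝ) ^ (-(n:ℤ)) := by rw [one_mul, PadicInt.norm_p_pow]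
      _ = ((p:ℝ)⁻¹) ^ n := by rw [zpow_neg, zpow_natCast, inv_pow]
      _ ≤ ((p:ℝ)⁻¹) ^ N := pow_le_pow_of_le_one (by positivity) hinv1.le hn
      _ < δ := hN
  have := hδf hdist
  rw [dist_eq_norm] at this
  exact this.le

theorem radon_nikodym_fermionic (p : ℕ) [hp : Fact p.Prime] (hodd : Odd p)
    (f : ℤ_[p] → ℚ_[p]) (hfUD : UniformlyDifferentiable p f)
    (g : ℤ_[p] → ℚ_[p]) (hg : Continuous g)
    (μ : ℕ → ℕ → ℚ_[p])
    (hμ : ∀ n a : ℕ, Tendsto (fun m => ∑ x ∈ Finset.range (p ^ m),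
        if x % p ^ n = a % p ^ n then f (x : ℤ_[p]) * (-1 : ℚ_[p]) ^ x else 0)
      atTop (nhds (μ n a)))
    (L M : ℚ_[p])
    (hL : Tendsto (fun n => ∑ i ∈ Finset.range (p ^ n),
        f (i : ℤ_[p]) * g (i : ℤ_[p]) * (-1 : ℚ_[p]) ^ i) atTop (nhds L))
    (hM : Tendsto (fun n => ∑ i ∈ Finset.range (p ^ n),
        g (i : ℤ_[p]) * μ n i) atTop (nhds M)) :
    M = L := by
  have hfc : Continuous f := UD_continuous hfUD
  have hfu : UniformContinuous f := CompactSpace.uniformContinuous_of_continuous hfc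
  obtain ⟨x₀, -, hx₀⟩ := (isCompact_univ : IsCompact (Set.univ : Set ℤ_[p])).exists_isMaxOn
      ⟨0, trivial⟩ (hg.norm.continuousOn)
  set B : ℝ := ‖g x₀‖ + 1 with hB
  have hB0 : 0 < B := by positivity
  have hgB : ∀ x : ℤ_[p], ‖g x‖ ≤ B := fun x => le_trans (hx₀ (Set.mem_univ x)) (by rw [hB]; linarith)
  have key2 : ∀ ε : ℝ, 0 < ε → ∃ N : ℕ, ∀ n, N ≤ n → ∀ i, i < p ^ n →
      ‖μ n i - f (i : ℤ_[p]) * (-1:ℚ_[p]) ^ i‖ ≤ ε := by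
    intro ε hε
    obtain ⟨N, hN⟩ := key_est hodd hfu hε
    refine ⟨N, fun n hn i hi => ?_⟩
    have hlim : Tendsto (fun m => ‖(∑ x ∈ Finset.range (p ^ m),
        if x % p ^ n = i % p ^ n then f (x : ℤ_[p]) * (-1 : ℚ_[p]) ^ x else 0)
        - f (i : ℤ_[p]) * (-1 : ℚ_[p]) ^ i‖) atTop
        (nhds ‖μ n i - f (i : ℤ_[p]) * (-1:ℚ_[p]) ^ i‖) :=
      Tendsto.norm ((hμ n i).sub_const _)
    exact le_of_tendsto hlim (eventually_atTop.2 ⟨n, fun m hm => hN n hn i hi m hm⟩)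
  have hD : Tendsto (fun n => (∑ i ∈ Finset.range (p^n), g (i : ℤ_[p]) * μ n i) -
      ∑ i ∈ Finset.range (p^n), f (i : ℤ_[p]) * g (i : ℤ_[p]) * (-1:ℚ_[p])^i)
      atTop (nhds 0) := by
    rw [NormedAddCommGroup.tendsto_nhds_zero]
    intro ε hε
    obtain ⟨N, hN⟩ := key2 (ε / (2 * B)) (by positivity)
    rw [eventually_atTop]
    refine ⟨N, fun n hn => ?_⟩
    have heq : (∑ i ∈ Finset.range (p^n), g (i : ℤ_[p]) * μ n i) -
        ∑ i ∈ Finset.range (p^n), f (i : ℤ_[p]) * g (i : ℤ_[p]) * (-1:ℚ_[p])^i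
        = ∑ i ∈ Finset.range (p^n),
            g (i : ℤ_[p]) * (μ n i - f (i : ℤ_[p]) * (-1:ℚ_[p])^i) := by
      rw [← Finset.sum_sub_distrib]
      exact Finset.sum_congr rfl fun i _ => by ring
    rw [heq]
    have hle : ‖∑ i ∈ Finset.range (p^n),
        g (i : ℤ_[p]) * (μ n i - f (i : ℤ_[p]) * (-1:ℚ_[p])^i)‖ ≤ ε / 2 := by
      apply IsUltrametricDist.norm_sum_le_of_forall_le_of_nonneg (by positivity)
      intro i hi
      rw [Finset.mem_range] at hi
      calc ‖g (i : ℤ_[p]) * (μ n i - f (i : ℤ_[p]) * (-1:ℚ_[p])^i)‖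
          = ‖g (i : ℤ_[p])‖ * ‖μ n i - f (i : ℤ_[p]) * (-1:ℚ_[p])^i‖ := norm_mul _ _
        _ ≤ B * (ε / (2*B)) :=
            mul_le_mul (hgB _) (hN n hn i hi) (norm_nonneg _) hB0.le
        _ = ε / 2 := by field_simp
    linarith
  have hML := hD.add hL
  rw [zero_add] at hML
  simp only [sub_add_cancel] at hML
  exact tendsto_nhds_unique hM hML
end
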